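/- Let 1 ≤ t ≤ n and let B be a family of t-element subsets of [n]. Let C be the initial segment of the colexicographic order on t-element subsets of [n] of size |B|. Then ν(B) ≥ ν(C), where ν(A) denotes the maximum size of a matching between A and its shadow ∂A in the containment bipartite graph. -/

import Mathlib

/-- A family of finsets that is a chain under inclusion. -/
def IsChainF (C : Finset (Finset ℕ)) : Prop :=
  ∀ A ∈ C, ∀ B ∈ C, A ⊆ B ∨ B ⊆ A

/-- A skipless chain: a chain in which every cardinality between those of two
members is attained by some member. -/
def SkiplessChain (C : Finset (Finset ℕ)) : Prop :=
  IsChainF C ∧ ∀ A ∈ C, ∀ B ∈ C, ∀ k : ℕ, A.card ≤ k → k ≤ B.card → ∃ D ∈ C, D.card = k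

/-- The maximum size of a matching between a family `𝒜` and its shadow in the
containment bipartite graph. -/
noncomputable def nu (𝒜 : Finset (Finset ℕ)) : ℕ :=
  sSup {m | ∃ s ⊆ 𝒜, s.card = m ∧ ∃ f : Finset ℕ → Finset ℕ,
    Set.InjOn f ↑s ∧ ∀ a ∈ s, f a ∈ Finset.shadow 𝒜 ∧ f a ⊆ a}

/-- The initial segment of the colexicographic order on `t`-element subsets of ℕ
of size `m`. -/
def colexSeg (m t : ℕ) : Finset (Finset ℕ) :=
  ((Finset.range (t + m)).powerset).filter (fun S => S.card = t ∧
    (((Finset.range (t + m)).powerset).filter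
      (fun B => B.card = t ∧ toColex B < toColex S)).card < m)

/-- `F` is a `k`-antichain saturated family of subsets of `[n] = {0, …, n-1}`. -/
def AntichainSat (n k : ℕ) (F : Finset (Finset ℕ)) : Prop :=
  (∀ X ∈ F, X ⊆ Finset.range n) ∧
  (¬ ∃ 𝒜 ⊆ F, 𝒜.card = k ∧ IsAntichain (· ⊆ ·) (𝒜 : Set (Finset ℕ))) ∧
  (∀ X : Finset ℕ, X ⊆ Finset.range n → X ∉ F →
    ∃ 𝒜 ⊆ insert X F, 𝒜.card = k ∧ IsAntichain (· ⊆ ·) (𝒜 : Set (Finset ℕ)))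

/-- The antichain saturation number `sat*(n, k)`. -/
noncomputable def satStar (n k : ℕ) : ℕ :=
  sInf {m | ∃ F : Finset (Finset ℕ), AntichainSat n k F ∧ F.card = m}

noncomputable def cAux (k ℓ : ℕ) : ℕ → ℕ
  | 0 => k - 1
  | d + 1 => nu (colexSeg (cAux k ℓ d) (ℓ / 2 - d))

/-- The sequence `c_t` from the paper: `c_t = k - 1` for `t ≥ ⌊ℓ/2⌋` and
`c_t = ν(C(c_{t+1}, t+1))` for `t < ⌊ℓ/2⌋`. -/
noncomputable def cseq (k ℓ t : ℕ) : ℕ :=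
  if ℓ / 2 ≤ t then k - 1 else cAux k ℓ (ℓ / 2 - t)


open Finset
open scoped FinsetFamily


namespace StmtAux

def MSet (𝒜 : Finset (Finset ℕ)) : Set ℕ :=
  {m | ∃ s ⊆ 𝒜, s.card = m ∧ ∃ f : Finset ℕ → Finset ℕ,
    Set.InjOn f ↑s ∧ ∀ a ∈ s, f a ∈ Finset.shadow 𝒜 ∧ f a ⊆ a}

lemma nu_eq (𝒜 : Finset (Finset ℕ)) : nu 𝒜 = sSup (MSet 𝒜) := rfl

lemma zero_mem_MSet (𝒜 : Finset (Finset ℕ)) : 0 ∈ MSet 𝒜 :=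
  ⟨∅, empty_subset _, card_empty, id, by simp, by simp⟩

lemma MSet_le_card {𝒜 : Finset (Finset ℕ)} {m : ℕ} (h : m ∈ MSet 𝒜) : m ≤ 𝒜.card := by
  obtain ⟨s, hs, rfl, -⟩ := h; exact card_le_card hs

lemma le_nu {𝒜 : Finset (Finset ℕ)} {m : ℕ} (h : m ∈ MSet 𝒜) : m ≤ nu 𝒜 :=
  le_csSup ⟨𝒜.card, fun _ hx => MSet_le_card hx⟩ h

lemma nu_le {𝒜 : Finset (Finset ℕ)} {K : ℕ} (h : ∀ m ∈ MSet 𝒜, m ≤ K) : nu 𝒜 ≤ K :=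
  csSup_le ⟨0, zero_mem_MSet 𝒜⟩ h

lemma nu_le_card (𝒜 : Finset (Finset ℕ)) : nu 𝒜 ≤ 𝒜.card :=
  nu_le fun _ h => MSet_le_card h

/-- Step 1: upper bound on nu from any subfamily. -/
lemma nu_le_def {t : ℕ} (ht : 1 ≤ t) {𝒜 S : Finset (Finset ℕ)}
    (h𝒜 : ∀ A ∈ 𝒜, A.card = t) (hS : S ⊆ 𝒜) :
    nu 𝒜 ≤ 𝒜.card - S.card + (∂ S).card := by
  refine nu_le ?_
  rintro m ⟨s, hs, rfl, f, hinj, hf⟩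
  have h1 : (s \ S).card ≤ 𝒜.card - S.card := by
    have : s \ S ⊆ 𝒜 \ S := sdiff_subset_sdiff hs le_rfl
    calc (s \ S).card ≤ (𝒜 \ S).card := card_le_card this
      _ = 𝒜.card - S.card := card_sdiff_of_subset hS
  have h2 : (s ∩ S).card ≤ (∂ S).card := by
    apply card_le_card_of_injOn f
    · intro a ha
      rw [mem_coe, mem_inter] at ha
      obtain ⟨has, haS⟩ := ha
      obtain ⟨hfa, hfsub⟩ := hf a has
      -- f a has card t - 1
      have hcard : (f a).card = t - 1 := by
        rw [mem_shadow_iff] at hfa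
        obtain ⟨B, hB, x, hx, hBx⟩ := hfa
        rw [← hBx, card_erase_of_mem hx, h𝒜 B hB]
      have hat : a.card = t := h𝒜 a (hs has)
      have hne : f a ≠ a := by
        intro h; rw [h, hat] at hcard; omega
      have hss : f a ⊂ a := Finset.ssubset_iff_subset_ne.2 ⟨hfsub, hne⟩
      obtain ⟨x, hxa, hxfa⟩ := exists_of_ssubset hss
      rw [mem_coe, mem_shadow_iff]
      refine ⟨a, haS, x, hxa, ?_⟩
      refine (Finset.eq_of_subset_of_card_le ((subset_erase).2 ⟨hfsub, hxfa⟩) ?_).symm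
      rw [card_erase_of_mem hxa, hat, hcard]
    · exact hinj.mono (by rw [coe_inter]; exact Set.inter_subset_left)
  calc s.card = (s \ S).card + (s ∩ S).card := by
        rw [card_sdiff_add_card_inter]
    _ ≤ 𝒜.card - S.card + (∂ S).card := Nat.add_le_add h1 h2

end StmtAux


namespace StmtAux2
variable {𝒜 : Finset (Finset ℕ)}

/-- Step 2: defect Hall lower bound on nu. -/
lemma nu_ge_hall (d : ℕ) (h : ∀ S ⊆ 𝒜, S.card ≤ (∂ S).card + d) :
    ∃ s ⊆ 𝒜, 𝒜.card - d ≤ s.card ∧ ∃ f : Finset ℕ → Finset ℕ,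
      Set.InjOn f ↑s ∧ ∀ a ∈ s, f a ∈ ∂ 𝒜 ∧ f a ⊆ a := by
  classical
  set β := (Finset ℕ) ⊕ ℕ
  set inl : Finset ℕ ↪ β := ⟨Sum.inl, Sum.inl_injective⟩
  set inr : ℕ ↪ β := ⟨Sum.inr, Sum.inr_injective⟩
  set t' : {A // A ∈ 𝒜} → Finset β :=
    fun a => (∂ ({a.1} : Finset (Finset ℕ))).map inl ∪ (range d).map inr with ht'
  have hall : ∀ s : Finset {A // A ∈ 𝒜}, s.card ≤ (s.biUnion t').card := by
    intro s
    rcases s.eq_empty_or_nonempty with rfl | hne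
    · simp
    set S : Finset (Finset ℕ) := s.image Subtype.val with hSdef
    have hScard : S.card = s.card := card_image_of_injective _ Subtype.val_injective
    have hSsub : S ⊆ 𝒜 := by
      intro A hA; rw [hSdef, mem_image] at hA; obtain ⟨a, -, rfl⟩ := hA; exact a.2
    have hsub : (∂ S).map inl ∪ (range d).map inr ⊆ s.biUnion t' := by
      intro x hx
      rw [mem_union] at hx
      rcases hx with hx | hx
      · rw [mem_map] at hx
        obtain ⟨B, hB, rfl⟩ := hx
        rw [mem_shadow_iff] at hB
        obtain ⟨A, hA, y, hy, hAy⟩ := hB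
        rw [hSdef, mem_image] at hA
        obtain ⟨a, ha, rfl⟩ := hA
        rw [mem_biUnion]
        refine ⟨a, ha, ?_⟩
        rw [ht', mem_union]
        left
        rw [mem_map]
        exact ⟨B, by rw [mem_shadow_iff]; exact ⟨a.1, mem_singleton_self _, y, hy, hAy⟩, rfl⟩
      · obtain ⟨a, ha⟩ := hne
        rw [mem_biUnion]
        exact ⟨a, ha, by rw [ht', mem_union]; right; exact hx⟩
    have hdisj : Disjoint ((∂ S).map inl) ((range d).map inr) := by
      simp only [disjoint_left, mem_map]
      rintro x ⟨B, -, rfl⟩ ⟨k, -, hk⟩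
      exact Sum.inl_ne_inr hk.symm
    calc s.card = S.card := hScard.symm
      _ ≤ (∂ S).card + d := h S hSsub
      _ = ((∂ S).map inl ∪ (range d).map inr).card := by
          rw [card_union_of_disjoint hdisj, card_map, card_map, card_range]
      _ ≤ (s.biUnion t').card := card_le_card hsub
  obtain ⟨f, hfinj, hf⟩ := (Finset.all_card_le_biUnion_card_iff_exists_injective t').1 hall
  -- the left-matched vertices
  set u : Finset {A // A ∈ 𝒜} := 𝒜.attach.filter (fun a => (f a).isLeft) with hu
  set v : Finset {A // A ∈ 𝒜} := 𝒜.attach.filter (fun a => ¬ (f a).isLeft) with hv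
  have hvcard : v.card ≤ d := by
    have : ∀ a ∈ v, Sum.elim (fun _ => 0) id (f a) ∈ range d := by
      intro a ha
      rw [hv, mem_filter] at ha
      have := hf a
      rw [ht', mem_union] at this
      rcases this with hmem | hmem
      · exfalso; rw [mem_map] at hmem; obtain ⟨B, -, hB⟩ := hmem
        apply ha.2; rw [← hB]; rfl
      · rw [mem_map] at hmem; obtain ⟨k, hk, hkf⟩ := hmem
        rw [← hkf]; exact hk
    have hinj2 : Set.InjOn (fun a => Sum.elim (fun _ => (0:ℕ)) id (f a)) ↑v := by
      intro a ha b hb hab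
      rw [mem_coe, hv, mem_filter] at ha hb
      obtain ⟨ka, hka⟩ := Sum.isRight_iff.1 (Sum.not_isLeft.1 ha.2)
      obtain ⟨kb, hkb⟩ := Sum.isRight_iff.1 (Sum.not_isLeft.1 hb.2)
      apply hfinj
      simp only [hka, hkb] at hab ⊢
      exact congrArg Sum.inr (by simpa using hab)
    calc v.card ≤ (range d).card := card_le_card_of_injOn _ this hinj2
      _ = d := card_range d
  have hucard : 𝒜.card - d ≤ u.card := by
    have huv : u.card + v.card = 𝒜.card := by
      rw [hu, hv, card_filter_add_card_filter_not, card_attach]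
    omega
  -- build the matching
  set s₀ : Finset (Finset ℕ) := u.image Subtype.val with hs₀
  have hs₀card : s₀.card = u.card := card_image_of_injective _ Subtype.val_injective
  set g : Finset ℕ → Finset ℕ :=
    fun A => if h : A ∈ 𝒜 then Sum.elim id (fun _ => ∅) (f ⟨A, h⟩) else ∅ with hg
  have key : ∀ A ∈ s₀, ∃ (hA : A ∈ 𝒜) (B : Finset ℕ),
      f ⟨A, hA⟩ = Sum.inl B ∧ g A = B ∧ B ∈ ∂ ({A} : Finset (Finset ℕ)) := by
    intro A hA
    rw [hs₀, mem_image] at hA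
    obtain ⟨a, ha, rfl⟩ := hA
    rw [hu, mem_filter] at ha
    obtain ⟨B, hB⟩ := Sum.isLeft_iff.1 ha.2
    refine ⟨a.2, B, by simpa using hB, ?_, ?_⟩
    · rw [hg]; simp only [a.2, dif_pos]
      have : (⟨a.1, a.2⟩ : {A // A ∈ 𝒜}) = a := rfl
      rw [this, hB]; rfl
    · have := hf a
      rw [ht', mem_union] at this
      rcases this with hmem | hmem
      · rw [mem_map] at hmem; obtain ⟨B', hB', hBB⟩ := hmem
        have hEq : (Sum.inl B' : β) = Sum.inl B := by
          have h3 : (inl B' : β) = Sum.inl B' := rfl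
          rw [← h3, hBB, hB]
        rw [Sum.inl.injEq] at hEq
        rwa [← hEq]
      · exfalso; rw [mem_map] at hmem; obtain ⟨k, -, hk⟩ := hmem
        rw [hB] at hk; exact Sum.inl_ne_inr hk.symm
  refine ⟨s₀, ?_, by omega, g, ?_, ?_⟩
  · intro A hA; rw [hs₀, mem_image] at hA; obtain ⟨a, -, rfl⟩ := hA; exact a.2
  · intro A hA A' hA' hAA
    rw [mem_coe] at hA hA'
    obtain ⟨h1, B, hfB, hgB, -⟩ := key A hA
    obtain ⟨h1', B', hfB', hgB', -⟩ := key A' hA'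
    have : B = B' := by rw [← hgB, ← hgB', hAA]
    have h2 : (⟨A, h1⟩ : {X // X ∈ 𝒜}) = ⟨A', h1'⟩ := hfinj (by rw [hfB, hfB', this])
    exact congrArg Subtype.val h2
  · intro A hA
    obtain ⟨h1, B, hfB, hgB, hBsh⟩ := key A hA
    rw [hgB]
    rw [mem_shadow_iff] at hBsh
    obtain ⟨C, hC, y, hy, hCy⟩ := hBsh
    rw [mem_singleton] at hC
    constructor
    · rw [mem_shadow_iff]; exact ⟨A, h1, y, hC ▸ hy, hC ▸ hCy⟩
    · rw [← hCy, hC]; exact erase_subset _ _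
end StmtAux2



namespace StmtAux3
open Finset.Colex

lemma rank_orderIso {γ : Type*} [LinearOrder γ] (q : Finset γ)
    (e : Fin q.card ≃o {x // x ∈ q}) (i : Fin q.card) :
    (q.filter (fun y => y < (e i : γ))).card = i := by
  rw [← card_range (i : ℕ)]
  refine card_bij' (fun x hx => (e.symm ⟨x, (mem_filter.1 hx).1⟩ : Fin q.card).val)
    (fun n hn => (e ⟨n, lt_of_lt_of_le (mem_range.1 hn) i.isLt.le⟩ : γ)) ?_ ?_ ?_ ?_
  · intro x hx
    rw [mem_range]
    have hlt : (⟨x, (mem_filter.1 hx).1⟩ : {x // x ∈ q}) < e i := by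
      exact Subtype.mk_lt_mk.2 (mem_filter.1 hx).2
    have := e.symm.lt_iff_lt.2 hlt
    rw [OrderIso.symm_apply_apply] at this
    exact this
  · intro n hn
    rw [mem_filter]
    have hn' : n < (i : ℕ) := mem_range.1 hn
    have hlt : (⟨n, lt_of_lt_of_le hn' i.isLt.le⟩ : Fin q.card) < i := by
      rw [Fin.lt_def]; exact hn'
    exact ⟨(e _).2, Subtype.mk_lt_mk.1 (e.lt_iff_lt.2 hlt)⟩
  · intro x hx
    simp
  · intro n hn
    simp

lemma card_filter_rank_lt {γ : Type*} [LinearOrder γ] (q : Finset γ) {m : ℕ} (hm : m ≤ q.card) :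
    (q.filter (fun x => (q.filter (fun y => y < x)).card < m)).card = m := by
  classical
  set e := q.orderIsoOfFin rfl with he
  have hA : ∀ i : Fin q.card, (q.filter (fun y => y < (e i : γ))).card = i := rank_orderIso q e
  have himg : q.filter (fun x => (q.filter (fun y => y < x)).card < m)
      = (univ.filter (fun i : Fin q.card => (i : ℕ) < m)).image (fun i => (e i : γ)) := by
    ext x
    simp only [mem_filter, mem_image, mem_univ, true_and]
    constructor
    · rintro ⟨hx, hr⟩
      refine ⟨e.symm ⟨x, hx⟩, ?_, by simp⟩
      have h2 := hA (e.symm ⟨x, hx⟩)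
      rw [OrderIso.apply_symm_apply] at h2
      rw [← h2]; exact hr
    · rintro ⟨i, hi, rfl⟩
      exact ⟨(e i).2, by rw [hA]; exact hi⟩
  rw [himg, card_image_of_injective _
    (show Function.Injective (fun i => ((e i : {x // x ∈ q}) : γ)) from
      fun a b h => e.injective (Subtype.val_injective h))]
  have hfin : (univ.filter (fun i : Fin q.card => (i : ℕ) < m)).card = (range m).card := by
    refine card_bij' (fun i _ => (i : ℕ)) (fun n hn => ⟨n, lt_of_lt_of_le (mem_range.1 hn) hm⟩)
      ?_ ?_ ?_ ?_
    · intro a ha; rw [mem_range]; exact (mem_filter.1 ha).2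
    · intro n hn; rw [mem_filter]; exact ⟨mem_univ _, mem_range.1 hn⟩
    · intro a ha; simp
    · intro n hn; simp
  rw [hfin, card_range]

/-- Membership in `colexSeg`, with the inner count expressed via `powersetCard`. -/
lemma mem_colexSeg {m t : ℕ} {S : Finset ℕ} :
    S ∈ colexSeg m t ↔ S ⊆ range (t + m) ∧ S.card = t ∧
      (((range (t + m)).powersetCard t).filter
        (fun B => toColex B < toColex S)).card < m := by
  have hfe : ∀ S : Finset ℕ, ((range (t + m)).powerset).filter
      (fun B => B.card = t ∧ toColex B < toColex S)
      = ((range (t + m)).powersetCard t).filter (fun B => toColex B < toColex S) := by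
    intro S
    ext B
    simp only [mem_filter, mem_powerset, mem_powersetCard]
    tauto
  rw [colexSeg, mem_filter, mem_powerset, hfe]

lemma colexSeg_sized {m t : ℕ} {S : Finset ℕ} (h : S ∈ colexSeg m t) : S.card = t :=
  (mem_colexSeg.1 h).2.1

lemma colexSeg_subset_range {m t : ℕ} {S : Finset ℕ} (h : S ∈ colexSeg m t) :
    S ⊆ range (t + m) := (mem_colexSeg.1 h).1

lemma below_subset {t N : ℕ} (ht : 1 ≤ t) {S : Finset ℕ} (hS : S ⊆ range N)
    (hcard : S.card = t) {B : Finset ℕ} (h : toColex B < toColex S) : B ⊆ range N := by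
  have hne : S.Nonempty := card_pos.1 (by omega)
  have hmax : ∀ x ∈ S, x ≤ S.max' hne := fun x hx => le_max' _ _ hx
  have hb := Colex.forall_le_mono h.le hmax
  intro b hb'
  rw [mem_range]
  exact lt_of_le_of_lt (hb b hb') (mem_range.1 (hS (S.max'_mem hne)))

lemma m_le_choose {m t : ℕ} (ht : 1 ≤ t) : m ≤ (t + m).choose t := by
  have h1 : (m + 1).choose m ≤ (t + m).choose m := Nat.choose_le_choose m (by omega)
  have h2 : (t + m).choose ((t + m) - t) = (t + m).choose t := Nat.choose_symm (by omega)
  rw [Nat.choose_succ_self_right] at h1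
  have h3 : (t + m) - t = m := by omega
  rw [h3] at h2
  omega

lemma card_colexSeg {m t : ℕ} (ht : 1 ≤ t) : (colexSeg m t).card = m := by
  classical
  set P : Finset (Finset ℕ) := (range (t + m)).powersetCard t with hP
  set q : Finset (Colex (Finset ℕ)) := P.image toColex with hq
  have hqcard : q.card = (t + m).choose t := by
    rw [hq, card_image_of_injective _ toColex.injective, hP, card_powersetCard, card_range]
  have hinner : ∀ S : Finset ℕ,
      (P.filter (fun B => toColex B < toColex S)).card
        = (q.filter (fun y => y < toColex S)).card := by
    intro S
    rw [hq, filter_image, card_image_of_injective _ toColex.injective]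
  have houter : colexSeg m t = P.filter
      (fun S => (q.filter (fun y => y < toColex S)).card < m) := by
    ext S
    rw [mem_colexSeg, mem_filter, hP, mem_powersetCard, hinner]
    tauto
  have hqm : m ≤ q.card := hqcard ▸ m_le_choose ht
  calc (colexSeg m t).card
      = (q.filter (fun x => (q.filter (fun y => y < x)).card < m)).card := by
        rw [houter, hq, filter_image, card_image_of_injective _ toColex.injective]
    _ = m := card_filter_rank_lt q hqm

/-- Downward closed in colex among `t`-sets. -/
lemma colexSeg_dc {m t : ℕ} (ht : 1 ≤ t) {S T : Finset ℕ} (hS : S ∈ colexSeg m t)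
    (hlt : toColex T < toColex S) (hT : T.card = t) : T ∈ colexSeg m t := by
  obtain ⟨hS1, hS2, hS3⟩ := mem_colexSeg.1 hS
  refine mem_colexSeg.2 ⟨below_subset ht hS1 hS2 hlt, hT, ?_⟩
  refine lt_of_le_of_lt (card_le_card (monotone_filter_right _ ?_)) hS3
  intro B _ hB
  exact hB.trans hlt

lemma colexSeg_mono {s m t : ℕ} (ht : 1 ≤ t) (hsm : s ≤ m) :
    colexSeg s t ⊆ colexSeg m t := by
  intro A hA
  obtain ⟨h1, h2, h3⟩ := mem_colexSeg.1 hA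
  have hsub : range (t + s) ⊆ range (t + m) := by
    intro x hx; rw [mem_range] at *; omega
  refine mem_colexSeg.2 ⟨h1.trans hsub, h2, ?_⟩
  have heq : ((range (t + m)).powersetCard t).filter (fun B => toColex B < toColex A)
      = ((range (t + s)).powersetCard t).filter (fun B => toColex B < toColex A) := by
    ext B
    simp only [mem_filter, mem_powersetCard]
    constructor
    · rintro ⟨⟨hB1, hB2⟩, hB3⟩
      exact ⟨⟨below_subset ht h1 h2 hB3, hB2⟩, hB3⟩
    · rintro ⟨⟨hB1, hB2⟩, hB3⟩
      exact ⟨⟨hB1.trans hsub, hB2⟩, hB3⟩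
  rw [heq]
  omega

end StmtAux3


attribute [-instance] instDecidableEqFin

namespace StmtAux4
open Finset.Colex

lemma shadow_image_val {N : ℕ} (ℱ : Finset (Finset (Fin N))) :
    ∂ (ℱ.image (fun A => A.image Fin.val)) = (∂ ℱ).image (fun A => A.image Fin.val) := by
  classical
  ext B
  simp only [mem_shadow_iff, mem_image]
  constructor
  · rintro ⟨A, ⟨A', hA', rfl⟩, x, hx, rfl⟩
    rw [mem_image] at hx
    obtain ⟨x', hx', rfl⟩ := hx
    refine ⟨A'.erase x', ⟨A', hA', x', hx', rfl⟩, ?_⟩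
    exact image_erase Fin.val_injective A' x'
  · rintro ⟨C, ⟨A', hA', x', hx', rfl⟩, rfl⟩
    refine ⟨A'.image Fin.val, ⟨A', hA', rfl⟩, x'.val, mem_image_of_mem _ hx', ?_⟩
    exact (image_erase Fin.val_injective A' x').symm

lemma up_attachFin {N : ℕ} (A : Finset ℕ) (h : ∀ m ∈ A, m < N) :
    (A.attachFin h).image Fin.val = A := by
  ext b
  simp only [mem_image]
  constructor
  · rintro ⟨a, ha, rfl⟩; exact (mem_attachFin h).1 ha
  · intro hb; exact ⟨⟨b, h b hb⟩, (mem_attachFin h).2 hb, rfl⟩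

lemma kk_nat {t N : ℕ} {𝒜 𝒞 : Finset (Finset ℕ)}
    (hAsub : ∀ A ∈ 𝒜, A ⊆ range N) (hAsized : ∀ A ∈ 𝒜, A.card = t)
    (hCsub : ∀ A ∈ 𝒞, A ⊆ range N) (hCsized : ∀ A ∈ 𝒞, A.card = t)
    (hDC : ∀ S ∈ 𝒞, ∀ T : Finset ℕ, toColex T < toColex S → T.card = t → T ∈ 𝒞)
    (hcard : 𝒞.card ≤ 𝒜.card) : (∂ 𝒞).card ≤ (∂ 𝒜).card := by
  classical
  set up : Finset (Fin N) → Finset ℕ := fun A => A.image Fin.val with hup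
  have upinj : Function.Injective up := image_injective Fin.val_injective
  have upcard : ∀ A : Finset (Fin N), (up A).card = A.card :=
    fun A => card_image_of_injective _ Fin.val_injective
  have key : ∀ ℱ : Finset (Finset ℕ), (∀ A ∈ ℱ, A ⊆ range N) →
      ∃ ℱ' : Finset (Finset (Fin N)), ℱ'.image up = ℱ := by
    intro ℱ hℱ
    refine ⟨(univ : Finset (Finset (Fin N))).filter (fun A => up A ∈ ℱ), ?_⟩
    apply Finset.Subset.antisymm
    · intro B hB
      rw [mem_image] at hB
      obtain ⟨A, hA, rfl⟩ := hB
      exact (mem_filter.1 hA).2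
    · intro A hA
      have hsub : ∀ m ∈ A, m < N := fun x hx => mem_range.1 (hℱ A hA hx)
      refine mem_image.2 ⟨A.attachFin hsub, mem_filter.2 ⟨mem_univ _, ?_⟩, ?_⟩
      · show (A.attachFin hsub).image Fin.val ∈ ℱ
        rw [up_attachFin A hsub]; exact hA
      · exact up_attachFin A hsub
  obtain ⟨𝒜', h𝒜'⟩ := key 𝒜 hAsub
  obtain ⟨𝒞', h𝒞'⟩ := key 𝒞 hCsub
  have hcardA : 𝒜'.card = 𝒜.card := by rw [← h𝒜', card_image_of_injective _ upinj]
  have hcardC : 𝒞'.card = 𝒞.card := by rw [← h𝒞', card_image_of_injective _ upinj]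
  have hshA : (∂ 𝒜).card = (∂ 𝒜').card := by
    rw [← h𝒜', shadow_image_val, card_image_of_injective _ upinj]
  have hshC : (∂ 𝒞).card = (∂ 𝒞').card := by
    rw [← h𝒞', shadow_image_val, card_image_of_injective _ upinj]
  have hsizedA : (𝒜' : Set (Finset (Fin N))).Sized t := by
    intro A hA
    rw [mem_coe] at hA
    have : up A ∈ 𝒜 := h𝒜' ▸ mem_image_of_mem up hA
    rw [← upcard A]
    exact hAsized _ this
  have hinit : IsInitSeg 𝒞' t := by
    constructor
    · intro A hA
      rw [mem_coe] at hA
      have : up A ∈ 𝒞 := h𝒞' ▸ mem_image_of_mem up hA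
      rw [← upcard A]
      exact hCsized _ this
    · rintro s' t' hs' ⟨hlt, hcard'⟩
      have h1 : up s' ∈ 𝒞 := h𝒞' ▸ mem_image_of_mem up hs'
      have h2 : toColex (up t') < toColex (up s') :=
        (toColex_image_lt_toColex_image Fin.val_strictMono).2 hlt
      have h3 : up t' ∈ 𝒞 := hDC _ h1 _ h2 (by rw [upcard]; exact hcard')
      -- t' is recovered from up t'
      have h4 : up t' ∈ 𝒞'.image up := h𝒞' ▸ h3
      rw [mem_image] at h4
      obtain ⟨t'', ht'', heq⟩ := h4
      rwa [← upinj heq]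
  rw [hshA, hshC]
  exact Finset.kruskal_katona hsizedA (by omega) hinit
end StmtAux4

/-- The initial segment of colex minimises the matching number to the shadow among
families of `t`-sets of the same size. -/
theorem stmt3 (n t : ℕ) (ht : 1 ≤ t) (htn : t ≤ n) (ℬ : Finset (Finset ℕ))
    (hB : ∀ A ∈ ℬ, A ⊆ Finset.range n ∧ A.card = t) :
    nu (colexSeg ℬ.card t) ≤ nu ℬ := by
  classical
  open Finset Finset.Colex StmtAux StmtAux2 StmtAux3 StmtAux4 in
  · set m := ℬ.card with hm
    set d0 := ℬ.powerset.sup (fun S => S.card - (Finset.shadow S).card) with hd0def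
    obtain ⟨S₀, hS₀mem, hsup⟩ := Finset.exists_mem_eq_sup ℬ.powerset
      ⟨∅, Finset.mem_powerset.2 (Finset.empty_subset _)⟩
      (fun S => S.card - (Finset.shadow S).card)
    have hS₀ : S₀ ⊆ ℬ := Finset.mem_powerset.1 hS₀mem
    have hd0 : d0 = S₀.card - (Finset.shadow S₀).card := by rw [hd0def, hsup]
    have hnuB : m - d0 ≤ nu ℬ := by
      obtain ⟨s, hs, hcard, f, hinj, hf⟩ := StmtAux2.nu_ge_hall d0 (fun S hS => by
        have h1 : S.card - (Finset.shadow S).card ≤ d0 := by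
          rw [hd0def]
          exact Finset.le_sup (f := fun S => S.card - (Finset.shadow S).card)
            (Finset.mem_powerset.2 hS)
        omega)
      exact le_trans hcard (StmtAux.le_nu ⟨s, hs, rfl, f, hinj, hf⟩)
    have hsized₀ : ∀ A ∈ S₀, A.card = t := fun A hA => (hB A (hS₀ hA)).2
    have hs1m : S₀.card ≤ m := Finset.card_le_card hS₀
    have hCsized : ∀ A ∈ colexSeg m t, A.card = t :=
      fun A hA => StmtAux3.colexSeg_sized hA
    by_cases hcase : S₀.card ≤ (Finset.shadow S₀).card
    · have hz : d0 = 0 := by omega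
      have h1 : nu (colexSeg m t) ≤ m :=
        le_trans (StmtAux.nu_le_card _) (le_of_eq (StmtAux3.card_colexSeg ht))
      omega
    · set Cs := colexSeg S₀.card t with hCs
      have hCscard : Cs.card = S₀.card := StmtAux3.card_colexSeg ht
      set N := max n (t + S₀.card) with hN
      have hkk : (Finset.shadow Cs).card ≤ (Finset.shadow S₀).card := by
        refine StmtAux4.kk_nat (t := t) (N := N)
          (fun A hA => ((hB A (hS₀ hA)).1).trans
            (Finset.range_subset_range.2 (le_max_left _ _)))
          hsized₀
          (fun A hA => (StmtAux3.colexSeg_subset_range hA).trans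
            (Finset.range_subset_range.2 (le_max_right _ _)))
          (fun A hA => StmtAux3.colexSeg_sized hA)
          (fun S hS T hlt hT => StmtAux3.colexSeg_dc ht hS hlt hT)
          (by rw [hCscard])
      have hstep1 : nu (colexSeg m t) ≤ (colexSeg m t).card - Cs.card
          + (Finset.shadow Cs).card :=
        StmtAux.nu_le_def ht hCsized (StmtAux3.colexSeg_mono ht hs1m)
      rw [StmtAux3.card_colexSeg ht, hCscard] at hstep1
      omega
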